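/- arXiv:1802.00719 — 6 statements merged into one kernel-verified Lean document; each statement's English description precedes it below -/
import Mathlib

section
/- Let k ≥ 1 be an integer and let p, q be real numbers with cos p ≠ cos q. Then λ_k(p,q) = 4k + 2·(sin p · sin(kp) − sin q · sin(kq))/(cos p − cos q). -/
noncomputable section

open Real

private lemma sum_cos_ap (a d : ℝ) (k : ℕ) :
    2 * Real.sin (d / 2) * ∑ j ∈ Finset.range k, Real.cos (a + j * d)
      = Real.sin (a + k * d - d / 2) - Real.sin (a - d / 2) := by
  induction k with
  | zero => simp
  | succ n ih =>
    rw [Finset.sum_range_succ, mul_add, ih]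
    have h := Real.sin_sub_sin (a + ((n : ℝ) + 1) * d - d / 2) (a + n * d - d / 2)
    rw [show (a + ((n : ℝ) + 1) * d - d / 2 - (a + n * d - d / 2)) / 2 = d / 2 by ring,
        show (a + ((n : ℝ) + 1) * d - d / 2 + (a + n * d - d / 2)) / 2 = a + n * d by ring] at h
    push_cast
    linarith

private lemma trig_id (u v a b : ℝ) :
    Real.sin (u + v) * (Real.sin (b + u - v) - Real.sin (a + u - v))
      - Real.sin (v - u) * (Real.sin (u + v - a) - Real.sin (b + u + v))
      = Real.sin (2 * v) * Real.sin b - Real.sin (2 * u) * Real.sin a := by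
  simp only [Real.sin_add, Real.sin_sub, Real.cos_add, Real.cos_sub, Real.sin_two_mul]
  linear_combination (-(2 * Real.sin u * Real.cos u * Real.sin a)) * Real.sin_sq_add_cos_sq v
    + (2 * Real.sin v * Real.cos v * Real.sin b) * Real.sin_sq_add_cos_sq u

/-- Fourier symbol of the `k`-path Laplacian of the square lattice `ℤ²`. -/
def lamk (k : ℕ) (p q : ℝ) : ℝ :=
  4 * k - 2 * ∑ j ∈ Finset.range k,
    (Real.cos (((k : ℝ) - j) * p + j * q) + Real.cos (((k : ℝ) - j) * q - j * p))

theorem stmt0 (k : ℕ) (hk : 1 ≤ k) (p q : ℝ) (h : Real.cos p ≠ Real.cos q) :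
    lamk k p q = 4 * k +
      2 * (Real.sin p * Real.sin (k * p) - Real.sin q * Real.sin (k * q)) /
        (Real.cos p - Real.cos q) := by
  have hC : Real.cos p - Real.cos q ≠ 0 := sub_ne_zero.mpr h
  set S1 := ∑ j ∈ Finset.range k, Real.cos ((k : ℝ) * p + j * (q - p)) with hS1
  set S2 := ∑ j ∈ Finset.range k, Real.cos ((k : ℝ) * q + j * (-(p + q))) with hS2
  have hsum : (∑ j ∈ Finset.range k,
      (Real.cos (((k : ℝ) - j) * p + j * q) + Real.cos (((k : ℝ) - j) * q - j * p)))
      = S1 + S2 := by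
    rw [hS1, hS2, ← Finset.sum_add_distrib]
    refine Finset.sum_congr rfl fun j hj => ?_
    have e1 : ((k : ℝ) - j) * p + j * q = (k : ℝ) * p + j * (q - p) := by ring
    have e2 : ((k : ℝ) - j) * q - j * p = (k : ℝ) * q + j * (-(p + q)) := by ring
    rw [e1, e2]
  have E1 := sum_cos_ap ((k : ℝ) * p) (q - p) k
  have E2 := sum_cos_ap ((k : ℝ) * q) (-(p + q)) k
  rw [← hS1] at E1
  rw [← hS2] at E2
  rw [show ((k : ℝ) * p + k * (q - p) - (q - p) / 2) = (k : ℝ) * q + p / 2 - q / 2 by ring,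
      show ((k : ℝ) * p - (q - p) / 2) = (k : ℝ) * p + p / 2 - q / 2 by ring,
      show ((q - p) / 2) = q / 2 - p / 2 by ring] at E1
  rw [show ((k : ℝ) * q + k * (-(p + q)) - (-(p + q)) / 2) = p / 2 + q / 2 - (k : ℝ) * p by ring,
      show ((k : ℝ) * q - (-(p + q)) / 2) = (k : ℝ) * q + p / 2 + q / 2 by ring,
      show ((-(p + q)) / 2) = -(p / 2 + q / 2) by ring, Real.sin_neg] at E2
  have tid := trig_id (p / 2) (q / 2) ((k : ℝ) * p) ((k : ℝ) * q)
  rw [show 2 * (q / 2) = q by ring, show 2 * (p / 2) = p by ring] at tid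
  have hc : Real.cos p - Real.cos q
      = 2 * Real.sin (p / 2 + q / 2) * Real.sin (q / 2 - p / 2) := by
    rw [Real.cos_sub_cos]
    rw [show ((p - q) / 2) = -((q - p) / 2) by ring, Real.sin_neg,
        show ((p + q) / 2) = p / 2 + q / 2 by ring,
        show ((q - p) / 2) = q / 2 - p / 2 by ring]
    ring
  have key : (Real.cos p - Real.cos q) * (S1 + S2)
      = Real.sin q * Real.sin ((k : ℝ) * q) - Real.sin p * Real.sin ((k : ℝ) * p) := by
    linear_combination (S1 + S2) * hc + Real.sin (p / 2 + q / 2) * E1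
      - Real.sin (q / 2 - p / 2) * E2 + tid
  have hS : S1 + S2 = (Real.sin q * Real.sin ((k : ℝ) * q)
      - Real.sin p * Real.sin ((k : ℝ) * p)) / (Real.cos p - Real.cos q) := by
    rw [eq_div_iff hC]; linarith [key]
  unfold lamk
  rw [hsum, hS]
  field_simp
  ring
end
end

section
/- Let s > 2 be real and let p, q be real numbers with cos p ≠ cos q. Then Σ_{k=1}^∞ k^{−s} λ_k(p,q) = 4ζ(s−1) + (g_s(p) − g_s(q))/(cos p − cos q). -/
noncomputable section

open Real

/-- The symbol of the Mellin-transformed `k`-path Laplacian. -/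
def lamM (s : ℝ) (p q : ℝ) : ℝ := ∑' k : ℕ, lamk (k + 1) p q / ((k : ℝ) + 1) ^ s

/-- `g_s(p) = 2 sin p · Σ_{k≥1} sin(kp)/k^s = 2 sin p · Im(Li_s(e^{ip}))`. -/
def gs (s : ℝ) (p : ℝ) : ℝ :=
  2 * Real.sin p * ∑' k : ℕ, Real.sin (((k : ℝ) + 1) * p) / ((k : ℝ) + 1) ^ s

/-- Telescoping auxiliary function for the key trig identity. -/
def TT (p q k j : ℝ) : ℝ :=
  (Real.cos ((k - j + 1) * p + j * q) - Real.cos ((k - j) * p + (j - 1) * q)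
   - Real.cos ((k - j + 1) * q - j * p) + Real.cos ((k - j) * q - (j - 1) * p)) / 2

lemma Tdiff (p q k j : ℝ) :
    TT p q k j - TT p q k (j + 1)
      = (Real.cos p - Real.cos q) *
        (Real.cos ((k - j) * p + j * q) + Real.cos ((k - j) * q - j * p)) := by
  unfold TT
  rw [show (k - j + 1) * p + j * q = ((k - j) * p + j * q) + p by ring,
      show (k - j) * p + (j - 1) * q = ((k - j) * p + j * q) - q by ring,
      show (k - j + 1) * q - j * p = ((k - j) * q - j * p) + q by ring,
      show (k - j) * q - (j - 1) * p = ((k - j) * q - j * p) + p by ring,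
      show (k - (j+1) + 1) * p + (j+1) * q = ((k - j) * p + j * q) + q by ring,
      show (k - (j+1)) * p + ((j+1) - 1) * q = ((k - j) * p + j * q) - p by ring,
      show (k - (j+1) + 1) * q - (j+1) * p = ((k - j) * q - j * p) - p by ring,
      show (k - (j+1)) * q - ((j+1) - 1) * p = ((k - j) * q - j * p) - q by ring]
  simp only [Real.cos_add, Real.cos_sub]
  ring

lemma Tends (p q : ℝ) (k : ℕ) :
    TT p q k 0 - TT p q k k
      = Real.sin q * Real.sin (k * q) - Real.sin p * Real.sin (k * p) := by
  unfold TT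
  rw [show ((k:ℝ) - 0 + 1) * p + 0 * q = (k:ℝ) * p + p by ring,
      show ((k:ℝ) - 0) * p + ((0:ℝ) - 1) * q = (k:ℝ) * p - q by ring,
      show ((k:ℝ) - 0 + 1) * q - 0 * p = (k:ℝ) * q + q by ring,
      show ((k:ℝ) - 0) * q - ((0:ℝ) - 1) * p = (k:ℝ) * q + p by ring,
      show ((k:ℝ) - k + 1) * p + (k:ℝ) * q = (k:ℝ) * q + p by ring,
      show ((k:ℝ) - k) * p + ((k:ℝ) - 1) * q = (k:ℝ) * q - q by ring,
      show ((k:ℝ) - k + 1) * q - (k:ℝ) * p = q - (k:ℝ) * p by ring,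
      show ((k:ℝ) - k) * q - ((k:ℝ) - 1) * p = p - (k:ℝ) * p by ring]
  simp only [Real.cos_add, Real.cos_sub]
  ring

lemma key (p q : ℝ) (k : ℕ) :
    (Real.cos p - Real.cos q) *
      ∑ j ∈ Finset.range k,
        (Real.cos (((k:ℝ) - j) * p + j * q) + Real.cos (((k:ℝ) - j) * q - j * p))
      = Real.sin q * Real.sin (k * q) - Real.sin p * Real.sin (k * p) := by
  rw [Finset.mul_sum]
  have : ∀ j ∈ Finset.range k,
      (Real.cos p - Real.cos q) *
        (Real.cos (((k:ℝ) - j) * p + j * q) + Real.cos (((k:ℝ) - j) * q - j * p))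
      = TT p q k j - TT p q k (j + 1 : ℕ) := by
    intro j _
    rw [← Tdiff p q k j]
    push_cast
    ring_nf
  rw [Finset.sum_congr rfl this, Finset.sum_range_sub' (fun j => TT p q k j)]
  simpa using Tends p q k

lemma summable_rpow_aux (t : ℝ) (ht : t < -1) :
    Summable (fun k : ℕ => ((k:ℝ)+1) ^ t) := by
  have h : Summable (fun n : ℕ => (n:ℝ) ^ t) := Real.summable_nat_rpow.2 ht
  have := (summable_nat_add_iff 1).2 h
  simpa using this

lemma summable_sin_aux (s x : ℝ) (hs : 1 < s) :
    Summable (fun k : ℕ => Real.sin (((k:ℝ)+1)*x) / ((k:ℝ)+1) ^ s) := by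
  have hg : Summable (fun k : ℕ => ((k:ℝ)+1) ^ (-s)) :=
    summable_rpow_aux (-s) (by linarith)
  refine Summable.of_norm_bounded hg (fun k => ?_)
  have h1 : (0:ℝ) < (k:ℝ)+1 := by positivity
  rw [Real.norm_eq_abs, abs_div, abs_of_pos (Real.rpow_pos_of_pos h1 s),
      Real.rpow_neg h1.le, inv_eq_one_div]
  gcongr
  exact Real.abs_sin_le_one _

/-- Pointwise algebraic rearrangement. -/
lemma pt_aux {c Ks Kv Kr Sg sp sq Sp Sq : ℝ} (hc : c ≠ 0) (hKs : Ks ≠ 0)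
    (hK : c * Sg = sq * Sq - sp * Sp) (hr : Kr = Kv / Ks) :
    (4 * Kv - 2 * Sg) / Ks
      = 4 * Kr + ((2 * sp) * (Sp / Ks) - (2 * sq) * (Sq / Ks)) / c := by
  have hSg : Sg = (sq * Sq - sp * Sp) / c := by
    rw [eq_div_iff hc, mul_comm]; exact hK
  rw [hSg, hr]
  field_simp
  ring

theorem stmt4 (s : ℝ) (hs : 2 < s) (p q : ℝ) (h : Real.cos p ≠ Real.cos q) :
    ((lamM s p q : ℝ) : ℂ)
      = 4 * riemannZeta ((s : ℂ) - 1)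
        + (((gs s p - gs s q) / (Real.cos p - Real.cos q) : ℝ) : ℂ) := by
  have hc : Real.cos p - Real.cos q ≠ 0 := sub_ne_zero.2 h
  have hZs : Summable (fun k : ℕ => ((k:ℝ)+1) ^ (1 - s)) :=
    summable_rpow_aux (1 - s) (by linarith)
  have hsp : Summable (fun k : ℕ => Real.sin (((k:ℝ)+1)*p) / ((k:ℝ)+1) ^ s) :=
    summable_sin_aux s p (by linarith)
  have hsq : Summable (fun k : ℕ => Real.sin (((k:ℝ)+1)*q) / ((k:ℝ)+1) ^ s) :=
    summable_sin_aux s q (by linarith)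
  set Z : ℝ := ∑' k : ℕ, ((k:ℝ)+1) ^ (1 - s) with hZdef
  -- the real identity
  have hre : lamM s p q
      = 4 * Z + (gs s p - gs s q) / (Real.cos p - Real.cos q) := by
    have hpt : ∀ k : ℕ, lamk (k + 1) p q / ((k : ℝ) + 1) ^ s
        = 4 * ((k:ℝ)+1) ^ (1 - s)
          + ((2 * Real.sin p) * (Real.sin (((k:ℝ)+1)*p) / ((k:ℝ)+1) ^ s)
             - (2 * Real.sin q) * (Real.sin (((k:ℝ)+1)*q) / ((k:ℝ)+1) ^ s))
            / (Real.cos p - Real.cos q) := by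
      intro k
      have h1 : (0:ℝ) < (k:ℝ)+1 := by positivity
      have hKs : ((k:ℝ)+1) ^ s ≠ 0 := ne_of_gt (Real.rpow_pos_of_pos h1 s)
      have hr : ((k:ℝ)+1) ^ (1 - s) = ((k:ℝ)+1) / ((k:ℝ)+1) ^ s := by
        rw [Real.rpow_sub h1, Real.rpow_one]
      have hK := key p q (k+1)
      push_cast at hK
      unfold lamk
      push_cast
      exact pt_aux hc hKs hK hr
    unfold lamM
    rw [tsum_congr hpt,
        Summable.tsum_add (hZs.mul_left 4)
          (((hsp.mul_left _).sub (hsq.mul_left _)).div_const _),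
        tsum_mul_left, tsum_div_const,
        Summable.tsum_sub (hsp.mul_left _) (hsq.mul_left _),
        tsum_mul_left, tsum_mul_left]
    unfold gs
    ring
  -- the zeta value
  have hz : riemannZeta ((s:ℂ) - 1) = ((Z : ℝ) : ℂ) := by
    rw [hZdef, Complex.ofReal_tsum,
        zeta_eq_tsum_one_div_nat_add_one_cpow
          (by rw [Complex.sub_re, Complex.ofReal_re, Complex.one_re]; linarith)]
    refine tsum_congr fun n => ?_
    have h1 : (0:ℝ) ≤ (n:ℝ)+1 := by positivity
    rw [show (1:ℝ) - s = -(s - 1) by ring, Real.rpow_neg h1,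
        Complex.ofReal_inv, Complex.ofReal_cpow h1]
    push_cast
    rw [one_div]
  rw [hre, hz]
  push_cast
  ring
end
end

section
/- Let s > 2 be real and let p be a real number with sin p ≠ 0. Then Σ_{k=1}^∞ k^{−s} λ_k(p,p) = 4ζ(s−1) − 2·(cos p/sin p)·Σ_{k=1}^∞ sin(kp)/k^s − 2·Σ_{k=1}^∞ cos(kp)/k^{s−1}. -/
noncomputable section

open Real

theorem cos_sum' (k : ℕ) (p : ℝ) (h : Real.sin p ≠ 0) :
    ∑ j ∈ Finset.range k, Real.cos (((k:ℝ) - 2*j) * p)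
      = Real.cos p * Real.sin (k * p) / Real.sin p := by
  have key : ∑ j ∈ Finset.range k, 2 * Real.sin p * Real.cos (((k:ℝ) - 2*j) * p)
      = Real.sin (((k:ℝ) - 2*(0:ℕ) + 1) * p) - Real.sin (((k:ℝ) - 2*(k:ℕ) + 1) * p) := by
    rw [← Finset.sum_range_sub' (fun j : ℕ => Real.sin (((k:ℝ) - 2*(j:ℕ) + 1) * p)) k]
    apply Finset.sum_congr rfl
    intro j _
    push_cast
    rw [show ((k:ℝ) - 2*j + 1) * p = ((k:ℝ) - 2*j) * p + p by ring,
        show ((k:ℝ) - 2*((j:ℝ)+1) + 1) * p = ((k:ℝ) - 2*j) * p - p by ring,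
        Real.sin_add, Real.sin_sub]
    ring
  push_cast at key
  have e1 : ((k:ℝ) - 2*0 + 1) * p = (k:ℝ)*p + p := by ring
  have e2 : ((k:ℝ) - 2*k + 1) * p = p - (k:ℝ)*p := by ring
  rw [e1, e2, Real.sin_add, Real.sin_sub] at key
  have h2 : (∑ j ∈ Finset.range k, Real.cos (((k:ℝ) - 2*j) * p)) * (2 * Real.sin p)
      = ∑ j ∈ Finset.range k, 2 * Real.sin p * Real.cos (((k:ℝ) - 2*j) * p) := by
    rw [Finset.sum_mul]; apply Finset.sum_congr rfl; intro j _; ring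
  field_simp
  linear_combination (h2.trans key) / 2

theorem sumbd (s : ℝ) (hs : 1 < s) (f : ℕ → ℝ) (hf : ∀ k, |f k| ≤ 1) :
    Summable (fun k : ℕ => f k/((k:ℝ)+1)^s) := by
  have h1 : Summable (fun k : ℕ => 1/((k:ℝ)+1)^s) := by
    have := (Real.summable_one_div_nat_rpow (p := s)).mpr hs
    simpa using (summable_nat_add_iff 1).mpr this
  apply h1.of_norm_bounded
  intro k
  have hp : (0:ℝ) < ((k:ℝ)+1)^s := by positivity
  rw [norm_div, Real.norm_eq_abs, Real.norm_eq_abs, abs_of_pos hp]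
  gcongr
  exact hf k

theorem lamk_eq (k : ℕ) (p : ℝ) (h : Real.sin p ≠ 0) :
    lamk k p p = 4*k - 2*((k:ℝ) * Real.cos (k*p)) - 2*(Real.cos p * Real.sin (k*p) / Real.sin p) := by
  unfold lamk
  have hc : ∀ j ∈ Finset.range k,
      Real.cos (((k:ℝ) - j) * p + j * p) + Real.cos (((k:ℝ) - j) * p - j * p)
        = Real.cos ((k:ℝ)*p) + Real.cos (((k:ℝ) - 2*j) * p) := by
    intro j _
    rw [show ((k:ℝ) - j) * p + (j:ℝ) * p = (k:ℝ)*p by ring,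
        show ((k:ℝ) - j) * p - (j:ℝ) * p = ((k:ℝ) - 2*j)*p by ring]
  rw [Finset.sum_congr rfl hc, Finset.sum_add_distrib, Finset.sum_const, Finset.card_range,
      cos_sum' k p h, nsmul_eq_mul]
  ring

theorem stmt5 (s : ℝ) (hs : 2 < s) (p : ℝ) (h : Real.sin p ≠ 0) :
    ((lamM s p p : ℝ) : ℂ)
      = 4 * riemannZeta ((s : ℂ) - 1)
        - 2 * ((Real.cos p / Real.sin p
            * ∑' k : ℕ, Real.sin (((k : ℝ) + 1) * p) / ((k : ℝ) + 1) ^ s : ℝ) : ℂ)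
        - 2 * ((∑' k : ℕ, Real.cos (((k : ℝ) + 1) * p) / ((k : ℝ) + 1) ^ (s - 1) : ℝ) : ℂ) := by
  have hs1 : (1:ℝ) < s - 1 := by linarith
  have hs0 : (1:ℝ) < s := by linarith
  -- term identity
  have hterm : ∀ k : ℕ, lamk (k + 1) p p / ((k : ℝ) + 1) ^ s
      = 4 * ((1:ℝ)/((k:ℝ)+1)^(s-1))
        - 2 * (Real.cos p / Real.sin p * (Real.sin (((k:ℝ)+1)*p) / ((k:ℝ)+1)^s))
        - 2 * (Real.cos (((k:ℝ)+1)*p) / ((k:ℝ)+1)^(s-1)) := by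
    intro k
    have hn : (0:ℝ) < (k:ℝ)+1 := by positivity
    have hpow : ((k:ℝ)+1)^s = ((k:ℝ)+1)^(s-1) * ((k:ℝ)+1) := by
      rw [← Real.rpow_add_one (ne_of_gt hn) (s-1)]; ring_nf
    rw [lamk_eq (k+1) p h]
    push_cast
    have hps : ((k:ℝ)+1)^s ≠ 0 := by positivity
    have hps1 : ((k:ℝ)+1)^(s-1) ≠ 0 := by positivity
    field_simp
    rw [hpow]
    ring
  have hA : Summable (fun k : ℕ => (4:ℝ) * ((1:ℝ)/((k:ℝ)+1)^(s-1))) :=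
    (sumbd (s-1) hs1 (fun _ => 1) (by intro k; simp)).mul_left 4
  have hB : Summable (fun k : ℕ =>
      (2:ℝ) * (Real.cos p / Real.sin p * (Real.sin (((k:ℝ)+1)*p) / ((k:ℝ)+1)^s))) := by
    have := (sumbd s hs0 (fun k => Real.sin (((k:ℝ)+1)*p))
      (fun k => abs_le.mpr ⟨Real.neg_one_le_sin _, Real.sin_le_one _⟩)).mul_left (Real.cos p / Real.sin p)
    exact this.mul_left 2
  have hC : Summable (fun k : ℕ =>
      (2:ℝ) * (Real.cos (((k:ℝ)+1)*p) / ((k:ℝ)+1)^(s-1))) :=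
    (sumbd (s-1) hs1 (fun k => Real.cos (((k:ℝ)+1)*p))
      (fun k => abs_le.mpr ⟨Real.neg_one_le_cos _, Real.cos_le_one _⟩)).mul_left 2
  have hreal : lamM s p p
      = 4 * (∑' k : ℕ, (1:ℝ)/((k:ℝ)+1)^(s-1))
        - 2 * (Real.cos p / Real.sin p * ∑' k : ℕ, Real.sin (((k:ℝ)+1)*p) / ((k:ℝ)+1)^s)
        - 2 * (∑' k : ℕ, Real.cos (((k:ℝ)+1)*p) / ((k:ℝ)+1)^(s-1)) := by
    unfold lamM
    rw [tsum_congr hterm, Summable.tsum_sub (hA.sub hB) hC, Summable.tsum_sub hA hB,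
        tsum_mul_left, tsum_mul_left, tsum_mul_left, tsum_mul_left]
  rw [hreal]
  push_cast
  have hzeta : riemannZeta ((s:ℂ) - 1)
      = ((∑' k : ℕ, (1:ℝ)/((k:ℝ)+1)^(s-1) : ℝ) : ℂ) := by
    rw [zeta_eq_tsum_one_div_nat_add_one_cpow (by simp; linarith),
        Complex.ofReal_tsum]
    apply tsum_congr
    intro k
    have hk : (0:ℝ) ≤ (k:ℝ)+1 := by positivity
    rw [Complex.ofReal_div, Complex.ofReal_one, Complex.ofReal_cpow hk]
    push_cast
    ring_nf
  rw [hzeta]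
  push_cast
  ring
end
end

section
/- Let s > 2 be real. Then for every (p,q) ∈ [−π,π]² with (p,q) ≠ (0,0), one has λ_M^s(p,q) > 0, where λ_M^s(p,q) := Σ_{k=1}^∞ k^{−s} λ_k(p,q). -/
noncomputable section

open Real

lemma lamk_nonneg (k : ℕ) (p q : ℝ) : 0 ≤ lamk k p q := by
  have h : ∑ j ∈ Finset.range k,
      (Real.cos (((k : ℝ) - j) * p + j * q) + Real.cos (((k : ℝ) - j) * q - j * p))
      ≤ ∑ _j ∈ Finset.range k, (2 : ℝ) := by
    apply Finset.sum_le_sum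
    intro j _
    have := Real.cos_le_one (((k : ℝ) - j) * p + j * q)
    have := Real.cos_le_one (((k : ℝ) - j) * q - j * p)
    linarith
  simp only [Finset.sum_const, Finset.card_range, nsmul_eq_mul] at h
  unfold lamk
  nlinarith

lemma lamk_le (k : ℕ) (p q : ℝ) : lamk k p q ≤ 8 * k := by
  have h : ∑ _j ∈ Finset.range k, (-2 : ℝ) ≤ ∑ j ∈ Finset.range k,
      (Real.cos (((k : ℝ) - j) * p + j * q) + Real.cos (((k : ℝ) - j) * q - j * p)) := by
    apply Finset.sum_le_sum
    intro j _
    have := Real.neg_one_le_cos (((k : ℝ) - j) * p + j * q)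
    have := Real.neg_one_le_cos (((k : ℝ) - j) * q - j * p)
    linarith
  simp only [Finset.sum_const, Finset.card_range, nsmul_eq_mul] at h
  unfold lamk
  nlinarith

lemma summable_lamM (s : ℝ) (hs : 2 < s) (p q : ℝ) :
    Summable (fun k : ℕ => lamk (k + 1) p q / ((k : ℝ) + 1) ^ s) := by
  have hsum : Summable (fun k : ℕ => 8 / ((k : ℝ) + 1) ^ (s - 1)) := by
    have := (Real.summable_one_div_nat_rpow (p := s - 1)).2 (by linarith)
    have h2 := (summable_nat_add_iff 1).2 this
    simpa [div_eq_mul_inv] using h2.mul_left 8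
  apply Summable.of_nonneg_of_le _ _ hsum
  · intro k
    exact div_nonneg (lamk_nonneg _ p q) (by positivity)
  · intro k
    have hk1 : (0:ℝ) < (k : ℝ) + 1 := by positivity
    have hle : lamk (k + 1) p q ≤ 8 * ((k : ℝ) + 1) := by
      have := lamk_le (k + 1) p q
      push_cast at this ⊢
      linarith
    rw [div_le_div_iff₀ (by positivity) (by positivity)]
    calc lamk (k + 1) p q * ((k : ℝ) + 1) ^ (s - 1)
        ≤ 8 * ((k : ℝ) + 1) * ((k : ℝ) + 1) ^ (s - 1) := by
          apply mul_le_mul_of_nonneg_right hle (by positivity)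
      _ = 8 * ((k : ℝ) + 1) ^ s := by
          rw [mul_assoc]
          congr 1
          nth_rewrite 1 [← Real.rpow_one ((k:ℝ)+1)]
          rw [← Real.rpow_add hk1]
          ring_nf

lemma cos_lt_one_of (x : ℝ) (hx : x ∈ Set.Icc (-π) π) (hne : x ≠ 0) : Real.cos x < 1 := by
  have hpi := Real.pi_pos
  have h1 : -(2 * π) < x := by have := hx.1; linarith
  have h2 : x < 2 * π := by have := hx.2; linarith
  have := (Real.cos_eq_one_iff_of_lt_of_lt h1 h2).not.2 hne
  exact lt_of_le_of_ne (Real.cos_le_one x) this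

theorem stmt6 (s : ℝ) (hs : 2 < s) :
    ∀ p q : ℝ, p ∈ Set.Icc (-π) π → q ∈ Set.Icc (-π) π → (p, q) ≠ (0, 0) →
      0 < lamM s p q := by
  intro p q hp hq hne
  have hsum := summable_lamM s hs p q
  have h0 : 0 < lamk 1 p q / ((0 : ℝ) + 1) ^ s := by
    have h1 : lamk 1 p q = 4 - 2 * (Real.cos p + Real.cos q) := by
      unfold lamk
      simp
    have hcp : Real.cos p ≤ 1 := Real.cos_le_one p
    have hcq : Real.cos q ≤ 1 := Real.cos_le_one q
    have hlt : Real.cos p < 1 ∨ Real.cos q < 1 := by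
      by_cases hp0 : p = 0
      · right
        apply cos_lt_one_of q hq
        intro hq0
        exact hne (by simp [hp0, hq0])
      · left; exact cos_lt_one_of p hp hp0
    have : 0 < lamk 1 p q := by rcases hlt with h | h <;> (rw [h1]; nlinarith)
    simp only [zero_add, Real.one_rpow]
    simpa using this
  have := Summable.tsum_pos hsum (fun k => div_nonneg (lamk_nonneg _ p q) (by positivity)) 0 (by simpa using h0)
  simpa [lamM] using this
end
end

section
/- Define R(p) := Σ_{k=1}^∞ 2 sin(kp)/k⁶ − 2ζ(5)·p + (ζ(3)/3)·p³ for p ∈ (0,2π). Then R is differentiable on (0,2π) and there exist δ ∈ (0,1) and C > 0 such that for all p ∈ (0,δ): |R(p)| ≤ C·p⁵·log(1/p) and |R'(p)| ≤ C·p⁴·log(1/p). -/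
noncomputable section

open Real

/-- The value of the Riemann zeta function (analytically continued) at a real point. -/
def zetaR (x : ℝ) : ℝ := (riemannZeta (x : ℂ)).re

namespace Stmt11Aux
open Set

lemma x_sub_sin_le {x : ℝ} (h0 : 0 ≤ x) (h1 : x ≤ 1) : x - Real.sin x ≤ x ^ 3 / 4 := by
  rcases eq_or_lt_of_le h0 with h | h
  · simp [← h]
  · nlinarith [Real.sin_gt_sub_cube h, pow_pos h 3]

lemma sin_le_self {x : ℝ} (h0 : 0 ≤ x) : Real.sin x ≤ x := by
  rcases eq_or_lt_of_le h0 with h | h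
  · simp [← h]
  · exact (Real.sin_lt h).le

lemma cos_aux {x : ℝ} (h0 : 0 ≤ x) (h1 : x ≤ 1) :
    |Real.cos x - 1 + x ^ 2 / 2| ≤ x ^ 4 / 4 := by
  have key := norm_image_sub_le_of_norm_deriv_le_segment'
    (f := fun t => Real.cos t - 1 + t ^ 2 / 2) (f' := fun t => t - Real.sin t)
    (a := 0) (b := x) (C := x ^ 3 / 4)
    (fun t _ => by
      have h1 : HasDerivAt (fun t : ℝ => Real.cos t - 1 + t ^ 2 / 2)
          (-Real.sin t + 2 * t ^ 1 / 2) t :=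
        ((Real.hasDerivAt_cos t).sub_const 1).add ((hasDerivAt_pow 2 t).div_const 2)
      exact ((by convert h1 using 1; ring : HasDerivAt _ (t - Real.sin t) t)).hasDerivWithinAt)
    (fun t ht => by
      rw [Real.norm_eq_abs, abs_sub_comm, abs_of_nonpos (by nlinarith [sin_le_self ht.1])]
      have := x_sub_sin_le ht.1 (le_trans ht.2.le h1)
      nlinarith [pow_le_pow_left₀ ht.1 ht.2.le 3])
    x (by constructor <;> linarith)
  simpa using key.trans (by nlinarith)

lemma sin_aux {x : ℝ} (h0 : 0 ≤ x) (h1 : x ≤ 1) :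
    |Real.sin x - x + x ^ 3 / 6| ≤ x ^ 5 / 4 := by
  have key := norm_image_sub_le_of_norm_deriv_le_segment'
    (f := fun t => Real.sin t - t + t ^ 3 / 6) (f' := fun t => Real.cos t - 1 + t ^ 2 / 2)
    (a := 0) (b := x) (C := x ^ 4 / 4)
    (fun t _ => by
      have h1 : HasDerivAt (fun t : ℝ => Real.sin t - t + t ^ 3 / 6)
          (Real.cos t - 1 + 3 * t ^ 2 / 6) t :=
        ((Real.hasDerivAt_sin t).sub (hasDerivAt_id t)).add ((hasDerivAt_pow 3 t).div_const 6)
      exact ((by convert h1 using 1; ring : HasDerivAt _ (Real.cos t - 1 + t ^ 2 / 2) t)).hasDerivWithinAt)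
    (fun t ht => by
      rw [Real.norm_eq_abs]
      have := cos_aux ht.1 (le_trans ht.2.le h1)
      nlinarith [pow_le_pow_left₀ ht.1 ht.2.le 4])
    x (by constructor <;> linarith)
  simpa using key.trans (by nlinarith)

lemma sin_aux' {x : ℝ} (h1 : 1 ≤ x) :
    |Real.sin x - x + x ^ 3 / 6| ≤ 3 * x ^ 3 := by
  have hs := abs_le.mp (Real.abs_sin_le_one x)
  have h2 : (1:ℝ) ≤ x ^ 2 := by nlinarith [mul_self_nonneg (x - 1)]
  have hx3 : x ≤ x ^ 3 := by nlinarith [mul_nonneg (by linarith : (0:ℝ) ≤ x) (by linarith : (0:ℝ) ≤ x ^ 2 - 1)]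
  have h13 : (1:ℝ) ≤ x ^ 3 := by linarith
  rw [abs_le]; constructor <;> nlinarith

lemma cos_aux' {x : ℝ} (h1 : 1 ≤ x) :
    |Real.cos x - 1 + x ^ 2 / 2| ≤ 3 * x ^ 2 := by
  have hs := abs_le.mp (Real.abs_cos_le_one x)
  have h12 : (1:ℝ) ≤ x ^ 2 := by nlinarith [mul_self_nonneg (x - 1)]
  rw [abs_le]; constructor <;> nlinarith
lemma sum_inv_pow (m : ℕ) (hm : 2 ≤ m) : Summable (fun k : ℕ => 1 / ((k : ℝ) + 1) ^ m) := by
  have h := (summable_one_div_nat_pow (p := m)).mpr hm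
  have := (summable_nat_add_iff 1).mpr h
  simpa [Nat.cast_add] using this

lemma harmonic_bound (N : ℕ) : ∑ k ∈ Finset.range N, 1 / ((k : ℝ) + 1) ≤ 1 + Real.log N := by
  have h := harmonic_le_one_add_log N
  have : (harmonic N : ℝ) = ∑ k ∈ Finset.range N, 1 / ((k : ℝ) + 1) := by
    rw [harmonic]
    push_cast
    simp [one_div]
  linarith [this ▸ h]

lemma tail_cube (N : ℕ) (hN : 1 ≤ N) :
    ∑' k : ℕ, 1 / ((k : ℝ) + (N : ℝ) + 1) ^ 3 ≤ 1 / (2 * (N : ℝ) ^ 2) := by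
  set a : ℕ → ℝ := fun k => 1 / (2 * ((k : ℝ) + N) * ((k : ℝ) + N + 1)) with ha
  have hN1 : (1:ℝ) ≤ (N:ℝ) := by exact_mod_cast hN
  have hpos : ∀ k : ℕ, (0:ℝ) < (k : ℝ) + N := fun k => by positivity
  have hanneg : ∀ k : ℕ, 0 ≤ a k - a (k + 1) := by
    intro k
    have h1 : (0:ℝ) < 2 * ((k:ℝ) + N) * ((k:ℝ) + N + 1) := by positivity
    have h2 : (0:ℝ) < 2 * (((k:ℝ)+1) + N) * (((k:ℝ)+1) + N + 1) := by positivity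
    have := one_div_le_one_div_of_le h1 (by push_cast; nlinarith : 2 * ((k:ℝ) + N) * ((k:ℝ) + N + 1) ≤ 2 * (((k+1:ℕ):ℝ) + N) * (((k+1:ℕ):ℝ) + N + 1))
    simpa [ha] using this
  have hat : Filter.Tendsto a Filter.atTop (nhds 0) := by
    apply squeeze_zero (fun k => by positivity) (g := fun k : ℕ => 1 / ((k : ℝ) + 1))
    · intro k
      apply one_div_le_one_div_of_le (by positivity)
      nlinarith [hpos k, (k.cast_nonneg : (0:ℝ) ≤ k) ]
    · exact tendsto_one_div_add_atTop_nhds_zero_nat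
  have hsum : HasSum (fun k => a k - a (k + 1)) (a 0) := by
    rw [hasSum_iff_tendsto_nat_of_nonneg hanneg]
    have : ∀ n, ∑ i ∈ Finset.range n, (a i - a (i + 1)) = a 0 - a n :=
      fun n => Finset.sum_range_sub' a n
    simp only [this]
    simpa using Filter.Tendsto.const_sub (a 0) hat
  have hle : ∀ k : ℕ, 1 / ((k : ℝ) + (N : ℝ) + 1) ^ 3 ≤ a k - a (k + 1) := by
    intro k
    have hm : (1:ℝ) ≤ (k:ℝ) + N := by nlinarith [(k.cast_nonneg : (0:ℝ) ≤ k)]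
    have heq : a k - a (k + 1) = 1 / (((k:ℝ) + N) * ((k:ℝ) + N + 1) * ((k:ℝ) + N + 2)) := by
      rw [ha]; push_cast; field_simp; ring
    rw [heq]
    apply one_div_le_one_div_of_le (by positivity)
    nlinarith
  have hsl : Summable (fun k : ℕ => 1 / ((k : ℝ) + (N : ℝ) + 1) ^ 3) := by
    exact Summable.of_nonneg_of_le (fun k => by positivity) hle hsum.summable
  calc ∑' k : ℕ, 1 / ((k : ℝ) + (N : ℝ) + 1) ^ 3 ≤ ∑' k, (a k - a (k + 1)) :=
        Summable.tsum_le_tsum hle hsl hsum.summable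
    _ = a 0 := hsum.tsum_eq
    _ ≤ 1 / (2 * (N : ℝ) ^ 2) := by
        rw [ha]
        apply one_div_le_one_div_of_le (by positivity)
        push_cast; nlinarith
lemma key_split (q c₁ c₂ p : ℝ) (hq : 0 ≤ q) (hc₁ : 0 ≤ c₁) (hc₂ : 0 ≤ c₂)
    (hp : 0 < p) (hp' : p < 1/4) (h : ℕ → ℝ) (hsum : Summable h)
    (hd1 : ∀ k : ℕ, ((k : ℝ) + 1) * p ≤ 1 → |h k| ≤ c₁ * q * p ^ 2 / ((k : ℝ) + 1))
    (hd2 : ∀ k : ℕ, 1 < ((k : ℝ) + 1) * p → |h k| ≤ c₂ * q / ((k : ℝ) + 1) ^ 3) :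
    |∑' k, h k| ≤ (2 * c₁ + 2 * c₂) * (q * p ^ 2) * Real.log (1 / p) := by
  set N : ℕ := ⌊1 / p⌋₊ with hNdef
  have hinv : (4:ℝ) < 1 / p := by rw [lt_div_iff₀ hp]; linarith
  have hN4 : 4 ≤ N := Nat.le_floor (by exact_mod_cast hinv.le)
  have hN1 : 1 ≤ N := by omega
  have hN4' : (4:ℝ) ≤ (N:ℝ) := by exact_mod_cast hN4
  have hNle : (N : ℝ) ≤ 1 / p := Nat.floor_le (by positivity)
  have hNgt : 1 / p < (N : ℝ) + 1 := Nat.lt_floor_add_one _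
  have hNgt' : 1 < ((N:ℝ) + 1) * p := by
    rw [div_lt_iff₀ hp] at hNgt; linarith
  have hNge : 1 / (2 * p) ≤ (N : ℝ) := by
    rw [div_le_iff₀ (by positivity)]
    nlinarith [hp.le]
  have hlog1 : (1:ℝ) ≤ Real.log (1 / p) := by
    rw [Real.le_log_iff_exp_le (by positivity)]
    calc Real.exp 1 ≤ 2.7182818286 := Real.exp_one_lt_d9.le
      _ ≤ 4 := by norm_num
      _ ≤ 1 / p := hinv.le
  have habs : Summable (fun k => |h k|) := hsum.abs
  have hs1 : |∑' k, h k| ≤ ∑' k, |h k| := by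
    rw [← Real.norm_eq_abs]
    refine (norm_tsum_le_tsum_norm ?_).trans_eq ?_
    · simpa [Real.norm_eq_abs] using habs
    · simp [Real.norm_eq_abs]
  have hsplit := Summable.sum_add_tsum_nat_add (f := fun k => |h k|) N habs
  -- head bound
  have hhead : ∑ k ∈ Finset.range N, |h k| ≤ 2 * c₁ * q * p ^ 2 * Real.log (1 / p) := by
    have hterm : ∀ k ∈ Finset.range N, |h k| ≤ c₁ * q * p ^ 2 * (1 / ((k : ℝ) + 1)) := by
      intro k hk
      have hk' : (k : ℝ) + 1 ≤ N := by
        have := Finset.mem_range.mp hk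
        exact_mod_cast Nat.succ_le_of_lt this
      have : ((k : ℝ) + 1) * p ≤ 1 := by
        calc ((k : ℝ) + 1) * p ≤ (N : ℝ) * p := by nlinarith
          _ ≤ (1 / p) * p := by nlinarith
          _ = 1 := by field_simp
      have := hd1 k this
      rw [div_eq_mul_one_div] at this
      exact this
    calc ∑ k ∈ Finset.range N, |h k| ≤ ∑ k ∈ Finset.range N, c₁ * q * p ^ 2 * (1 / ((k : ℝ) + 1)) :=
          Finset.sum_le_sum hterm
      _ = c₁ * q * p ^ 2 * ∑ k ∈ Finset.range N, 1 / ((k : ℝ) + 1) := by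
          rw [Finset.mul_sum]
      _ ≤ c₁ * q * p ^ 2 * (1 + Real.log N) := by
          apply mul_le_mul_of_nonneg_left (harmonic_bound N) (by positivity)
      _ ≤ c₁ * q * p ^ 2 * (Real.log (1/p) + Real.log (1/p)) := by
          apply mul_le_mul_of_nonneg_left _ (by positivity)
          have hlogN : Real.log N ≤ Real.log (1 / p) :=
            Real.log_le_log (by exact_mod_cast Nat.lt_of_lt_of_le Nat.zero_lt_one hN1) hNle
          linarith
      _ = 2 * c₁ * q * p ^ 2 * Real.log (1 / p) := by ring
  -- tail bound
  have htail : ∑' k : ℕ, |h (k + N)| ≤ 2 * c₂ * q * p ^ 2 := by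
    have hterm : ∀ k : ℕ, |h (k + N)| ≤ c₂ * q * (1 / ((k : ℝ) + (N:ℝ) + 1) ^ 3) := by
      intro k
      have hx : 1 < (((k + N : ℕ) : ℝ) + 1) * p := by
        push_cast
        have : 1 / p < (k:ℝ) + N + 1 := by
          have : (0:ℝ) ≤ (k:ℝ) := k.cast_nonneg
          linarith
        calc (1:ℝ) = (1/p) * p := by field_simp
          _ < ((k:ℝ) + N + 1) * p := by nlinarith
      have := hd2 (k + N) hx
      rw [div_eq_mul_one_div] at this
      push_cast at this ⊢
      convert this using 3
    have hsl : Summable fun k : ℕ => |h (k + N)| := (summable_nat_add_iff (f := fun k => |h k|) N).mpr habs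
    have hsr : Summable fun k : ℕ => c₂ * q * (1 / ((k : ℝ) + (N:ℝ) + 1) ^ 3) := by
      apply Summable.mul_left
      have := (summable_nat_add_iff (N+1)).mpr ((summable_one_div_nat_pow (p := 3)).mpr (by norm_num))
      simpa [Nat.cast_add, add_assoc] using this
    calc ∑' k : ℕ, |h (k + N)| ≤ ∑' k : ℕ, c₂ * q * (1 / ((k : ℝ) + (N:ℝ) + 1) ^ 3) :=
          Summable.tsum_le_tsum hterm hsl hsr
      _ = c₂ * q * ∑' k : ℕ, 1 / ((k : ℝ) + (N:ℝ) + 1) ^ 3 := tsum_mul_left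
      _ ≤ c₂ * q * (1 / (2 * (N:ℝ) ^ 2)) := by
          apply mul_le_mul_of_nonneg_left (tail_cube N hN1) (by positivity)
      _ ≤ 2 * c₂ * q * p ^ 2 := by
          have hNpos : (0:ℝ) < (N:ℝ) := by exact_mod_cast Nat.lt_of_lt_of_le Nat.zero_lt_one hN1
          have h1 : 1 / (2 * (N:ℝ) ^ 2) ≤ 2 * p ^ 2 := by
            rw [div_le_iff₀ (by positivity)]
            have : 1 / (2*p) * (1/(2*p)) ≤ (N:ℝ) * N :=
              mul_le_mul hNge hNge (by positivity) (by positivity)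
            have h2 : 1 / (4 * p^2) ≤ (N:ℝ)^2 := by
              calc 1 / (4 * p^2) = 1/(2*p) * (1/(2*p)) := by field_simp; ring
                _ ≤ (N:ℝ) * N := this
                _ = (N:ℝ)^2 := by ring
            rw [div_le_iff₀ (by positivity)] at h2
            nlinarith
          calc c₂ * q * (1 / (2 * (N:ℝ) ^ 2)) ≤ c₂ * q * (2 * p ^ 2) :=
                mul_le_mul_of_nonneg_left h1 (by positivity)
            _ = 2 * c₂ * q * p ^ 2 := by ring
  have htail' : ∑' k : ℕ, |h (k + N)| ≤ 2 * c₂ * q * p ^ 2 * Real.log (1/p) := by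
    calc ∑' k : ℕ, |h (k + N)| ≤ 2 * c₂ * q * p ^ 2 := htail
      _ = 2 * c₂ * q * p ^ 2 * 1 := (mul_one _).symm
      _ ≤ 2 * c₂ * q * p ^ 2 * Real.log (1/p) :=
          mul_le_mul_of_nonneg_left hlog1 (by positivity)
  calc |∑' k, h k| ≤ ∑' k, |h k| := hs1
    _ = ∑ k ∈ Finset.range N, |h k| + ∑' k : ℕ, |h (k + N)| := hsplit.symm
    _ ≤ 2 * c₁ * q * p ^ 2 * Real.log (1/p) + 2 * c₂ * q * p ^ 2 * Real.log (1/p) :=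
        add_le_add hhead htail'
    _ = (2 * c₁ + 2 * c₂) * (q * p ^ 2) * Real.log (1 / p) := by ring
lemma zetaR_nat (m : ℕ) (hm : 2 ≤ m) :
    zetaR m = ∑' k : ℕ, 1 / ((k : ℝ) + 1) ^ m := by
  have hre : 1 < (((m : ℝ) : ℂ)).re := by
    simp only [Complex.ofReal_re]
    exact_mod_cast Nat.lt_of_lt_of_le Nat.one_lt_two hm
  unfold zetaR
  rw [zeta_eq_tsum_one_div_nat_add_one_cpow hre]
  have heach : ∀ n : ℕ, (1 / ((n : ℂ) + 1) ^ (((m : ℝ)) : ℂ)) = ((1 / ((n : ℝ) + 1) ^ m : ℝ) : ℂ) := by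
    intro n
    have hc : (((m : ℝ)) : ℂ) = ((m : ℕ) : ℂ) := by push_cast; ring
    rw [hc, Complex.cpow_natCast]
    push_cast
    ring
  rw [tsum_congr heach, ← Complex.ofReal_tsum, Complex.ofReal_re]
lemma summable_sin6 (y : ℝ) :
    Summable (fun k : ℕ => 2 * Real.sin (((k : ℝ) + 1) * y) / ((k : ℝ) + 1) ^ 6) := by
  apply Summable.of_norm_bounded (g := fun k : ℕ => 2 * (1 / ((k : ℝ) + 1) ^ 6))
    ((sum_inv_pow 6 (by norm_num)).mul_left 2)
  intro k
  rw [Real.norm_eq_abs, abs_div, abs_of_pos (by positivity : (0:ℝ) < ((k:ℝ)+1)^6)]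
  rw [div_le_iff₀ (by positivity), abs_mul, abs_two]
  have h1 := Real.abs_sin_le_one (((k : ℝ) + 1) * y)
  have he : 2 * (1 / ((k:ℝ) + 1) ^ 6) * ((k:ℝ) + 1) ^ 6 = 2 := by field_simp
  rw [he]; linarith

lemma summable_cos5 (y : ℝ) :
    Summable (fun k : ℕ => 2 * Real.cos (((k : ℝ) + 1) * y) / ((k : ℝ) + 1) ^ 5) := by
  apply Summable.of_norm_bounded (g := fun k : ℕ => 2 * (1 / ((k : ℝ) + 1) ^ 5))
    ((sum_inv_pow 5 (by norm_num)).mul_left 2)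
  intro k
  rw [Real.norm_eq_abs, abs_div, abs_of_pos (by positivity : (0:ℝ) < ((k:ℝ)+1)^5)]
  rw [div_le_iff₀ (by positivity), abs_mul, abs_two]
  have h1 := Real.abs_cos_le_one (((k : ℝ) + 1) * y)
  have he : 2 * (1 / ((k:ℝ) + 1) ^ 5) * ((k:ℝ) + 1) ^ 5 = 2 := by field_simp
  rw [he]; linarith

lemma T_hasDeriv (y : ℝ) :
    HasDerivAt (fun z : ℝ => ∑' k : ℕ, 2 * Real.sin (((k : ℝ) + 1) * z) / ((k : ℝ) + 1) ^ 6)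
      (∑' k : ℕ, 2 * Real.cos (((k : ℝ) + 1) * y) / ((k : ℝ) + 1) ^ 5) y := by
  refine hasDerivAt_tsum (𝕜 := ℝ)
    (g := fun k z => 2 * Real.sin (((k : ℝ) + 1) * z) / ((k : ℝ) + 1) ^ 6)
    (g' := fun k z => 2 * Real.cos (((k : ℝ) + 1) * z) / ((k : ℝ) + 1) ^ 5)
    (u := fun k : ℕ => 2 * (1 / ((k : ℝ) + 1) ^ 5)) (y₀ := (0:ℝ))
    ((sum_inv_pow 5 (by norm_num)).mul_left 2) ?_ ?_ ?_ y
  · intro n z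
    have h1 : HasDerivAt (fun z : ℝ => ((n : ℝ) + 1) * z) ((n : ℝ) + 1) z := by
      simpa using (hasDerivAt_id z).const_mul ((n : ℝ) + 1)
    have h2 := ((Real.hasDerivAt_sin (((n : ℝ) + 1) * z)).comp z h1).const_mul 2
    have h3 := h2.div_const (((n : ℝ) + 1) ^ 6)
    refine h3.congr_deriv ?_
    rw [div_eq_div_iff (by positivity) (by positivity)]
    ring
  · intro n z
    rw [Real.norm_eq_abs, abs_div, abs_of_pos (by positivity : (0:ℝ) < ((n:ℝ)+1)^5)]
    rw [div_le_iff₀ (by positivity), abs_mul, abs_two]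
    have h1 := Real.abs_cos_le_one (((n : ℝ) + 1) * z)
    have he : 2 * (1 / ((n:ℝ) + 1) ^ 5) * ((n:ℝ) + 1) ^ 5 = 2 := by field_simp
    rw [he]; linarith
  · have : (fun n : ℕ => 2 * Real.sin (((n : ℝ) + 1) * 0) / ((n : ℝ) + 1) ^ 6) = fun _ => (0:ℝ) := by
      funext n; simp
    rw [this]; exact summable_zero

end Stmt11Aux

open Stmt11Aux Set

theorem stmt11 :
    let R : ℝ → ℝ := fun p =>
      (∑' k : ℕ, 2 * Real.sin (((k : ℝ) + 1) * p) / ((k : ℝ) + 1) ^ 6)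
        - 2 * zetaR 5 * p + zetaR 3 / 3 * p ^ 3
    (∀ p ∈ Set.Ioo (0 : ℝ) (2 * π), DifferentiableAt ℝ R p) ∧
    ∃ δ ∈ Set.Ioo (0 : ℝ) 1, ∃ C > (0 : ℝ), ∀ p ∈ Set.Ioo (0 : ℝ) δ,
      |R p| ≤ C * p ^ 5 * Real.log (1 / p) ∧ |deriv R p| ≤ C * p ^ 4 * Real.log (1 / p) := by
  intro R
  have hderiv : ∀ p : ℝ, HasDerivAt R
      ((∑' k : ℕ, 2 * Real.cos (((k : ℝ) + 1) * p) / ((k : ℝ) + 1) ^ 5)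
        - 2 * zetaR 5 + zetaR 3 * p ^ 2) p := by
    intro p
    have h1 := T_hasDeriv p
    have h2 : HasDerivAt (fun y : ℝ => 2 * zetaR 5 * y) (2 * zetaR 5) p := by
      simpa using (hasDerivAt_id p).const_mul (2 * zetaR 5)
    have h3 : HasDerivAt (fun y : ℝ => zetaR 3 / 3 * y ^ 3) (zetaR 3 * p ^ 2) p := by
      have := (hasDerivAt_pow 3 p).const_mul (zetaR 3 / 3)
      refine this.congr_deriv ?_
      push_cast; ring
    exact (h1.sub h2).add h3
  constructor
  · exact fun p _ => (hderiv p).differentiableAt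
  · refine ⟨1/4, by norm_num, 13, by norm_num, fun p hp => ?_⟩
    obtain ⟨hp0, hp4⟩ := hp
    have hz5 : zetaR 5 = ∑' k : ℕ, 1 / ((k : ℝ) + 1) ^ 5 := by
      have := zetaR_nat 5 (by norm_num)
      norm_num at this ⊢; exact this
    have hz3 : zetaR 3 = ∑' k : ℕ, 1 / ((k : ℝ) + 1) ^ 3 := by
      have := zetaR_nat 3 (by norm_num)
      norm_num at this ⊢; exact this
    -- summability of all pieces
    have hA : Summable (fun k : ℕ => 2 * Real.sin (((k : ℝ) + 1) * p) / ((k : ℝ) + 1) ^ 6) :=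
      summable_sin6 p
    have hB : Summable (fun k : ℕ => 2 * p / ((k : ℝ) + 1) ^ 5) := by
      have := (sum_inv_pow 5 (by norm_num)).mul_left (2 * p)
      simpa [mul_one_div, div_eq_mul_inv] using this
    have hC : Summable (fun k : ℕ => p ^ 3 / (3 * ((k : ℝ) + 1) ^ 3)) := by
      have := (sum_inv_pow 3 (by norm_num)).mul_left (p ^ 3 / 3)
      apply this.congr
      intro k; field_simp
    have hA' : Summable (fun k : ℕ => 2 * Real.cos (((k : ℝ) + 1) * p) / ((k : ℝ) + 1) ^ 5) :=
      summable_cos5 p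
    have hB' : Summable (fun k : ℕ => (2:ℝ) / ((k : ℝ) + 1) ^ 5) := by
      have := (sum_inv_pow 5 (by norm_num)).mul_left (2:ℝ)
      simpa [mul_one_div, div_eq_mul_inv] using this
    have hC' : Summable (fun k : ℕ => p ^ 2 / ((k : ℝ) + 1) ^ 3) := by
      have := (sum_inv_pow 3 (by norm_num)).mul_left (p ^ 2)
      simpa [mul_one_div, div_eq_mul_inv] using this
    constructor
    · -- value bound
      have e5 : 2 * zetaR 5 * p = ∑' k : ℕ, 2 * p / ((k : ℝ) + 1) ^ 5 := by
        rw [hz5]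
        calc 2 * (∑' k : ℕ, 1 / ((k : ℝ) + 1) ^ 5) * p
            = (2 * p) * ∑' k : ℕ, 1 / ((k : ℝ) + 1) ^ 5 := by ring
          _ = ∑' k : ℕ, (2 * p) * (1 / ((k : ℝ) + 1) ^ 5) := tsum_mul_left.symm
          _ = ∑' k : ℕ, 2 * p / ((k : ℝ) + 1) ^ 5 := tsum_congr fun k => by ring
      have e3 : zetaR 3 / 3 * p ^ 3 = ∑' k : ℕ, p ^ 3 / (3 * ((k : ℝ) + 1) ^ 3) := by
        rw [hz3]
        calc (∑' k : ℕ, 1 / ((k : ℝ) + 1) ^ 3) / 3 * p ^ 3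
            = (p ^ 3 / 3) * ∑' k : ℕ, 1 / ((k : ℝ) + 1) ^ 3 := by ring
          _ = ∑' k : ℕ, (p ^ 3 / 3) * (1 / ((k : ℝ) + 1) ^ 3) := tsum_mul_left.symm
          _ = ∑' k : ℕ, p ^ 3 / (3 * ((k : ℝ) + 1) ^ 3) := tsum_congr fun k => by
              rw [mul_one_div, div_div]
      have hRform : R p = ∑' k : ℕ,
          (2 * Real.sin (((k : ℝ) + 1) * p) / ((k : ℝ) + 1) ^ 6
            - 2 * p / ((k : ℝ) + 1) ^ 5 + p ^ 3 / (3 * ((k : ℝ) + 1) ^ 3)) := by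
        show (∑' k : ℕ, 2 * Real.sin (((k : ℝ) + 1) * p) / ((k : ℝ) + 1) ^ 6)
          - 2 * zetaR 5 * p + zetaR 3 / 3 * p ^ 3 = _
        rw [e5, e3, ← Summable.tsum_sub hA hB, ← Summable.tsum_add (hA.sub hB) hC]
      rw [hRform]
      have key := key_split (p ^ 3) (1/2) 6 p (by positivity) (by norm_num) (by norm_num) hp0 hp4
        _ ((hA.sub hB).add hC) ?_ ?_
      · calc |∑' k : ℕ, (2 * Real.sin (((k : ℝ) + 1) * p) / ((k : ℝ) + 1) ^ 6
            - 2 * p / ((k : ℝ) + 1) ^ 5 + p ^ 3 / (3 * ((k : ℝ) + 1) ^ 3))|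
            ≤ (2 * (1/2) + 2 * 6) * (p ^ 3 * p ^ 2) * Real.log (1 / p) := key
          _ = 13 * p ^ 5 * Real.log (1 / p) := by ring
      · -- head estimate for value
        intro k hk
        have hkpos : (0:ℝ) < (k : ℝ) + 1 := by positivity
        have hx0 : 0 ≤ ((k : ℝ) + 1) * p := by positivity
        have hcomb : 2 * Real.sin (((k : ℝ) + 1) * p) / ((k : ℝ) + 1) ^ 6
            - 2 * p / ((k : ℝ) + 1) ^ 5 + p ^ 3 / (3 * ((k : ℝ) + 1) ^ 3)
            = 2 * (Real.sin (((k : ℝ) + 1) * p) - ((k : ℝ) + 1) * p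
                + (((k : ℝ) + 1) * p) ^ 3 / 6) / ((k : ℝ) + 1) ^ 6 := by
          field_simp
          ring
        rw [hcomb, abs_div, abs_of_pos (by positivity : (0:ℝ) < ((k:ℝ)+1)^6), abs_mul, abs_two]
        have hsin := sin_aux hx0 hk
        have hrhs : (1:ℝ)/2 * p ^ 3 * p ^ 2 / ((k : ℝ) + 1)
            = 2 * ((((k : ℝ) + 1) * p) ^ 5 / 4) / ((k : ℝ) + 1) ^ 6 := by
          field_simp
          ring
        rw [hrhs]
        apply div_le_div_of_nonneg_right _ (by positivity)
        linarith
      · -- tail estimate for value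
        intro k hk
        have hkpos : (0:ℝ) < (k : ℝ) + 1 := by positivity
        have hcomb : 2 * Real.sin (((k : ℝ) + 1) * p) / ((k : ℝ) + 1) ^ 6
            - 2 * p / ((k : ℝ) + 1) ^ 5 + p ^ 3 / (3 * ((k : ℝ) + 1) ^ 3)
            = 2 * (Real.sin (((k : ℝ) + 1) * p) - ((k : ℝ) + 1) * p
                + (((k : ℝ) + 1) * p) ^ 3 / 6) / ((k : ℝ) + 1) ^ 6 := by
          field_simp
          ring
        rw [hcomb, abs_div, abs_of_pos (by positivity : (0:ℝ) < ((k:ℝ)+1)^6), abs_mul, abs_two]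
        have hsin := sin_aux' hk.le
        have hrhs : (6:ℝ) * p ^ 3 / ((k : ℝ) + 1) ^ 3
            = 2 * (3 * (((k : ℝ) + 1) * p) ^ 3) / ((k : ℝ) + 1) ^ 6 := by
          field_simp
          ring
        rw [hrhs]
        apply div_le_div_of_nonneg_right _ (by positivity)
        linarith
    · -- derivative bound
      rw [(hderiv p).deriv]
      have e5' : 2 * zetaR 5 = ∑' k : ℕ, (2:ℝ) / ((k : ℝ) + 1) ^ 5 := by
        rw [hz5]
        calc 2 * (∑' k : ℕ, 1 / ((k : ℝ) + 1) ^ 5)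
            = ∑' k : ℕ, (2:ℝ) * (1 / ((k : ℝ) + 1) ^ 5) := tsum_mul_left.symm
          _ = ∑' k : ℕ, (2:ℝ) / ((k : ℝ) + 1) ^ 5 := tsum_congr fun k => by ring
      have e3' : zetaR 3 * p ^ 2 = ∑' k : ℕ, p ^ 2 / ((k : ℝ) + 1) ^ 3 := by
        rw [hz3]
        calc (∑' k : ℕ, 1 / ((k : ℝ) + 1) ^ 3) * p ^ 2
            = (p ^ 2) * ∑' k : ℕ, 1 / ((k : ℝ) + 1) ^ 3 := by ring
          _ = ∑' k : ℕ, (p ^ 2) * (1 / ((k : ℝ) + 1) ^ 3) := tsum_mul_left.symm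
          _ = ∑' k : ℕ, p ^ 2 / ((k : ℝ) + 1) ^ 3 := tsum_congr fun k => by ring
      have hDform : (∑' k : ℕ, 2 * Real.cos (((k : ℝ) + 1) * p) / ((k : ℝ) + 1) ^ 5)
          - 2 * zetaR 5 + zetaR 3 * p ^ 2 = ∑' k : ℕ,
          (2 * Real.cos (((k : ℝ) + 1) * p) / ((k : ℝ) + 1) ^ 5
            - 2 / ((k : ℝ) + 1) ^ 5 + p ^ 2 / ((k : ℝ) + 1) ^ 3) := by
        rw [e5', e3', ← Summable.tsum_sub hA' hB', ← Summable.tsum_add (hA'.sub hB') hC']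
      rw [hDform]
      have key := key_split (p ^ 2) (1/2) 6 p (by positivity) (by norm_num) (by norm_num) hp0 hp4
        _ ((hA'.sub hB').add hC') ?_ ?_
      · calc |∑' k : ℕ, (2 * Real.cos (((k : ℝ) + 1) * p) / ((k : ℝ) + 1) ^ 5
            - 2 / ((k : ℝ) + 1) ^ 5 + p ^ 2 / ((k : ℝ) + 1) ^ 3)|
            ≤ (2 * (1/2) + 2 * 6) * (p ^ 2 * p ^ 2) * Real.log (1 / p) := key
          _ = 13 * p ^ 4 * Real.log (1 / p) := by ring
      · -- head estimate for derivative
        intro k hk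
        have hkpos : (0:ℝ) < (k : ℝ) + 1 := by positivity
        have hx0 : 0 ≤ ((k : ℝ) + 1) * p := by positivity
        have hcomb : 2 * Real.cos (((k : ℝ) + 1) * p) / ((k : ℝ) + 1) ^ 5
            - 2 / ((k : ℝ) + 1) ^ 5 + p ^ 2 / ((k : ℝ) + 1) ^ 3
            = 2 * (Real.cos (((k : ℝ) + 1) * p) - 1
                + (((k : ℝ) + 1) * p) ^ 2 / 2) / ((k : ℝ) + 1) ^ 5 := by
          field_simp
        rw [hcomb, abs_div, abs_of_pos (by positivity : (0:ℝ) < ((k:ℝ)+1)^5), abs_mul, abs_two]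
        have hcos := cos_aux hx0 hk
        have hrhs : (1:ℝ)/2 * p ^ 2 * p ^ 2 / ((k : ℝ) + 1)
            = 2 * ((((k : ℝ) + 1) * p) ^ 4 / 4) / ((k : ℝ) + 1) ^ 5 := by
          field_simp
          ring
        rw [hrhs]
        apply div_le_div_of_nonneg_right _ (by positivity)
        linarith
      · -- tail estimate for derivative
        intro k hk
        have hkpos : (0:ℝ) < (k : ℝ) + 1 := by positivity
        have hcomb : 2 * Real.cos (((k : ℝ) + 1) * p) / ((k : ℝ) + 1) ^ 5
            - 2 / ((k : ℝ) + 1) ^ 5 + p ^ 2 / ((k : ℝ) + 1) ^ 3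
            = 2 * (Real.cos (((k : ℝ) + 1) * p) - 1
                + (((k : ℝ) + 1) * p) ^ 2 / 2) / ((k : ℝ) + 1) ^ 5 := by
          field_simp
        rw [hcomb, abs_div, abs_of_pos (by positivity : (0:ℝ) < ((k:ℝ)+1)^5), abs_mul, abs_two]
        have hcos := cos_aux' hk.le
        have hrhs : (6:ℝ) * p ^ 2 / ((k : ℝ) + 1) ^ 3
            = 2 * (3 * (((k : ℝ) + 1) * p) ^ 2) / ((k : ℝ) + 1) ^ 5 := by
          field_simp
          ring
        rw [hrhs]
        apply div_le_div_of_nonneg_right _ (by positivity)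
        linarith
end
end

section
/- Let k ≥ 1 be an integer. Then there exist δ > 0 and C > 0 such that for all p, q ∈ [−δ,δ], |λ_k(p,q) − ((2k³ + k)/3)·(p² + q²)| ≤ C·(p⁴ + q⁴); i.e., λ_k(p,q) = ((2k³+k)/3)(p²+q²) + O(p⁴+q⁴) as p, q → 0. -/
noncomputable section

open Real

lemma sumId (k : ℕ) : ∑ j ∈ Finset.range k, (j:ℝ) = k*(k-1)/2 := by
  induction k with
  | zero => simp
  | succ n ih => rw [Finset.sum_range_succ, ih]; push_cast; ring

lemma sumSq (k : ℕ) : ∑ j ∈ Finset.range k, (j:ℝ)^2 = k*(k-1)*(2*k-1)/6 := by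
  induction k with
  | zero => simp
  | succ n ih => rw [Finset.sum_range_succ, ih]; push_cast; ring

lemma keySum (k : ℕ) : ∑ j ∈ Finset.range k, (((k:ℝ)-j)^2 + (j:ℝ)^2) = (2*(k:ℝ)^3+(k:ℝ))/3 := by
  have h : ∀ j ∈ Finset.range k, (((k:ℝ)-j)^2 + (j:ℝ)^2)
      = (k:ℝ)^2 - 2*(k:ℝ)*(j:ℝ) + 2*(j:ℝ)^2 := by intros; ring
  rw [Finset.sum_congr rfl h]
  rw [Finset.sum_add_distrib, Finset.sum_sub_distrib, Finset.sum_const, ← Finset.mul_sum,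
    ← Finset.mul_sum, sumId, sumSq, Finset.card_range]
  ring

theorem stmt19 (k : ℕ) (hk : 1 ≤ k) :
    ∃ δ > (0 : ℝ), ∃ C > (0 : ℝ), ∀ p q : ℝ,
      p ∈ Set.Icc (-δ) δ → q ∈ Set.Icc (-δ) δ →
        |lamk k p q - (2 * (k : ℝ) ^ 3 + k) / 3 * (p ^ 2 + q ^ 2)|
          ≤ C * (p ^ 4 + q ^ 4) := by
  have hk0 : (0:ℝ) < k := by exact_mod_cast hk
  refine ⟨1/(2*k), by positivity, 32*(k:ℝ)^5, by positivity, ?_⟩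
  intro p q hp hq
  have hpabs : |p| ≤ 1/(2*(k:ℝ)) := abs_le.mpr ⟨hp.1, hp.2⟩
  have hqabs : |q| ≤ 1/(2*(k:ℝ)) := abs_le.mpr ⟨hq.1, hq.2⟩
  have hhalf : (k:ℝ)*(1/(2*(k:ℝ))) = 1/2 := by field_simp
  -- per-term error bound
  have hterm : ∀ j ∈ Finset.range k,
      |(Real.cos (((k:ℝ)-j)*p + j*q) - (1 - (((k:ℝ)-j)*p + j*q)^2/2))
        + (Real.cos (((k:ℝ)-j)*q - j*p) - (1 - (((k:ℝ)-j)*q - j*p)^2/2))|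
        ≤ 16*(k:ℝ)^4*(p^4+q^4) := by
    intro j hj
    set a := ((k:ℝ)-j)*p + j*q with ha_def
    set b := ((k:ℝ)-j)*q - j*p with hb_def
    clear_value a b
    have hjk : (j:ℝ) ≤ (k:ℝ) := by exact_mod_cast (Finset.mem_range.mp hj).le
    have hj0 : (0:ℝ) ≤ (j:ℝ) := Nat.cast_nonneg j
    have hap := abs_nonneg p
    have haq := abs_nonneg q
    have ha1 : |a| ≤ (k:ℝ)*(|p|+|q|) := by
      calc |a| ≤ |((k:ℝ)-j)*p| + |(j:ℝ)*q| := by rw [ha_def]; exact abs_add_le _ _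
        _ = ((k:ℝ)-j)*|p| + (j:ℝ)*|q| := by
            rw [abs_mul, abs_mul, abs_of_nonneg (by linarith), abs_of_nonneg hj0]
        _ ≤ (k:ℝ)*(|p|+|q|) := by nlinarith
    have hb1 : |b| ≤ (k:ℝ)*(|p|+|q|) := by
      calc |b| ≤ |((k:ℝ)-j)*q| + |(j:ℝ)*p| := by
            rw [hb_def, sub_eq_add_neg]
            exact (abs_add_le _ _).trans (by rw [abs_neg])
        _ = ((k:ℝ)-j)*|q| + (j:ℝ)*|p| := by
            rw [abs_mul, abs_mul, abs_of_nonneg (by linarith), abs_of_nonneg hj0]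
        _ ≤ (k:ℝ)*(|p|+|q|) := by nlinarith
    have hsmall : (k:ℝ)*(|p|+|q|) ≤ 1 := by nlinarith
    have ha2 : |a| ≤ 1 := ha1.trans hsmall
    have hb2 : |b| ≤ 1 := hb1.trans hsmall
    have hpow : ((k:ℝ)*(|p|+|q|))^4 ≤ 8*(k:ℝ)^4*(p^4+q^4) := by
      have e1 : |p|^4 = p^4 := by rw [← abs_pow, abs_of_nonneg (by positivity)]
      have e2 : |q|^4 = q^4 := by rw [← abs_pow, abs_of_nonneg (by positivity)]
      have h8 : (|p|+|q|)^4 ≤ 8*(|p|^4+|q|^4) := by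
        nlinarith [sq_nonneg (|p|-|q|), sq_nonneg (|p|+|q|), sq_nonneg (|p|^2-|q|^2),
          mul_nonneg hap haq]
      have hk4 : (0:ℝ) ≤ (k:ℝ)^4 := by positivity
      calc ((k:ℝ)*(|p|+|q|))^4 = (k:ℝ)^4 * (|p|+|q|)^4 := by ring
        _ ≤ (k:ℝ)^4 * (8*(|p|^4+|q|^4)) := by
            exact mul_le_mul_of_nonneg_left h8 hk4
        _ = 8*(k:ℝ)^4*(p^4+q^4) := by rw [e1, e2]; ring
    have ha4 : a^4 ≤ 8*(k:ℝ)^4*(p^4+q^4) := by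
      have : a^4 = |a|^4 := by rw [← abs_pow, abs_of_nonneg (by positivity)]
      rw [this]
      exact (pow_le_pow_left₀ (abs_nonneg a) ha1 4).trans hpow
    have hb4 : b^4 ≤ 8*(k:ℝ)^4*(p^4+q^4) := by
      have : b^4 = |b|^4 := by rw [← abs_pow, abs_of_nonneg (by positivity)]
      rw [this]
      exact (pow_le_pow_left₀ (abs_nonneg b) hb1 4).trans hpow
    have hca : |Real.cos a - (1 - a^2/2)| ≤ a^4 := by
      have h := Real.cos_bound ha2
      have ea : |a|^4 = a^4 := by rw [← abs_pow, abs_of_nonneg (by positivity)]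
      have ha0 : (0:ℝ) ≤ a^4 := by positivity
      rw [ea] at h; linarith
    have hcb : |Real.cos b - (1 - b^2/2)| ≤ b^4 := by
      have h := Real.cos_bound hb2
      have eb : |b|^4 = b^4 := by rw [← abs_pow, abs_of_nonneg (by positivity)]
      have hb0 : (0:ℝ) ≤ b^4 := by positivity
      rw [eb] at h; linarith
    calc |(Real.cos a - (1 - a^2/2)) + (Real.cos b - (1 - b^2/2))|
        ≤ |Real.cos a - (1 - a^2/2)| + |Real.cos b - (1 - b^2/2)| := abs_add_le _ _
      _ ≤ a^4 + b^4 := add_le_add hca hcb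
      _ ≤ 16*(k:ℝ)^4*(p^4+q^4) := by linarith
  -- quadratic part sums exactly to the main term
  have hsum : ∑ j ∈ Finset.range k,
      ((((k:ℝ)-j)*p + j*q)^2 + (((k:ℝ)-j)*q - j*p)^2)
      = (2*(k:ℝ)^3+(k:ℝ))/3 * (p^2+q^2) := by
    have h : ∀ j ∈ Finset.range k,
        ((((k:ℝ)-j)*p + j*q)^2 + (((k:ℝ)-j)*q - j*p)^2)
        = ((((k:ℝ)-j)^2 + (j:ℝ)^2)) * (p^2+q^2) := by intros; ring
    rw [Finset.sum_congr rfl h, ← Finset.sum_mul, keySum]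
  -- rewrite the difference as a sum of errors
  have h4k : (4:ℝ)*k = ∑ _j ∈ Finset.range k, (4:ℝ) := by
    rw [Finset.sum_const, Finset.card_range, nsmul_eq_mul, mul_comm]
  have hL : lamk k p q - (2 * (k : ℝ) ^ 3 + k) / 3 * (p ^ 2 + q ^ 2)
      = ∑ j ∈ Finset.range k, (-2) *
        ((Real.cos (((k:ℝ)-j)*p + j*q) - (1 - (((k:ℝ)-j)*p + j*q)^2/2))
          + (Real.cos (((k:ℝ)-j)*q - j*p) - (1 - (((k:ℝ)-j)*q - j*p)^2/2))) := by
    unfold lamk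
    rw [← hsum, h4k, Finset.mul_sum, ← Finset.sum_sub_distrib, ← Finset.sum_sub_distrib]
    exact Finset.sum_congr rfl fun j hj => by ring
  rw [hL]
  calc |∑ j ∈ Finset.range k, (-2) *
        ((Real.cos (((k:ℝ)-j)*p + j*q) - (1 - (((k:ℝ)-j)*p + j*q)^2/2))
          + (Real.cos (((k:ℝ)-j)*q - j*p) - (1 - (((k:ℝ)-j)*q - j*p)^2/2)))|
      ≤ ∑ j ∈ Finset.range k, |(-2) *
        ((Real.cos (((k:ℝ)-j)*p + j*q) - (1 - (((k:ℝ)-j)*p + j*q)^2/2))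
          + (Real.cos (((k:ℝ)-j)*q - j*p) - (1 - (((k:ℝ)-j)*q - j*p)^2/2)))| :=
        Finset.abs_sum_le_sum_abs _ _
    _ ≤ ∑ _j ∈ Finset.range k, 32*(k:ℝ)^4*(p^4+q^4) := by
        refine Finset.sum_le_sum fun j hj => ?_
        rw [abs_mul]
        have := hterm j hj
        rw [show |(-2:ℝ)| = 2 by norm_num]
        linarith [abs_nonneg ((Real.cos (((k:ℝ)-j)*p + j*q) - (1 - (((k:ℝ)-j)*p + j*q)^2/2))
          + (Real.cos (((k:ℝ)-j)*q - j*p) - (1 - (((k:ℝ)-j)*q - j*p)^2/2)))]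
    _ = 32*(k:ℝ)^5*(p^4+q^4) := by
        rw [Finset.sum_const, Finset.card_range, nsmul_eq_mul]; ring
end
end
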